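/- Let x : E → ℝ satisfy ∑_{e∈F} x(e) ≤ f(F) for every F ⊆ E. If A, B ⊆ E are two sets that are both tight for x, i.e. ∑_{e∈A} x(e) = f(A) and ∑_{e∈B} x(e) = f(B), then A ⊆ B or B ⊆ A. -/
import Mathlib



lemma prod_lt_one_of_mem {α : Type*} (s : Finset α) (g : α → ℝ)
    (h0 : ∀ e ∈ s, 0 < g e) (h1 : ∀ e ∈ s, g e < 1) (hne : s.Nonempty) :
    ∏ e ∈ s, g e < 1 := by
  obtain ⟨e0, he0⟩ := hne
  classical
  rw [← Finset.prod_erase_mul s g he0]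
  have hrest : ∏ e ∈ s.erase e0, g e ≤ 1 :=
    Finset.prod_le_one (fun e he => (h0 e (Finset.mem_of_mem_erase he)).le)
      (fun e he => (h1 e (Finset.mem_of_mem_erase he)).le)
  have hrest0 : 0 < ∏ e ∈ s.erase e0, g e :=
    Finset.prod_pos fun e he => h0 e (Finset.mem_of_mem_erase he)
  calc (∏ e ∈ s.erase e0, g e) * g e0 ≤ 1 * g e0 := by
        exact mul_le_mul_of_nonneg_right hrest (h0 e0 he0).le
    _ = g e0 := one_mul _
    _ < 1 := h1 e0 he0

/-- **Tight sets form a chain**: if `x` satisfies `∑_{e∈F} x e ≤ f F` for all `F ⊆ E`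
(where `f(F) = 1 - ∏_{e∈F}(1 - p e)` with `0 < p e < 1`), and `A, B ⊆ E` are both tight
for `x`, then `A ⊆ B` or `B ⊆ A`. -/
theorem tight_sets_chain
    {α : Type*} [DecidableEq α] (E : Finset α) (p : α → ℝ)
    (hp : ∀ e ∈ E, 0 < p e ∧ p e < 1)
    (x : α → ℝ)
    (hx : ∀ F ⊆ E, ∑ e ∈ F, x e ≤ 1 - ∏ e ∈ F, (1 - p e))
    (A B : Finset α) (hA : A ⊆ E) (hB : B ⊆ E)
    (htA : ∑ e ∈ A, x e = 1 - ∏ e ∈ A, (1 - p e))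
    (htB : ∑ e ∈ B, x e = 1 - ∏ e ∈ B, (1 - p e)) :
    A ⊆ B ∨ B ⊆ A := by
  by_contra hcon
  push_neg at hcon
  obtain ⟨hAB, hBA⟩ := hcon
  -- A \ B and B \ A are nonempty
  have hABne : (A \ B).Nonempty := by
    rw [Finset.sdiff_nonempty]; exact hAB
  have hBAne : (B \ A).Nonempty := by
    rw [Finset.sdiff_nonempty]; exact hBA
  set a := ∏ e ∈ A \ B, (1 - p e) with ha_def
  set b := ∏ e ∈ B \ A, (1 - p e) with hb_def
  set c := ∏ e ∈ A ∩ B, (1 - p e) with hc_def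
  have hfac : ∀ e ∈ E, 0 < 1 - p e ∧ 1 - p e < 1 := by
    intro e he
    obtain ⟨h1, h2⟩ := hp e he
    constructor <;> linarith
  have ha_pos : 0 < a := Finset.prod_pos fun e he =>
    (hfac e (hA (Finset.mem_sdiff.mp he).1)).1
  have hb_pos : 0 < b := Finset.prod_pos fun e he =>
    (hfac e (hB (Finset.mem_sdiff.mp he).1)).1
  have hc_pos : 0 < c := Finset.prod_pos fun e he =>
    (hfac e (hA (Finset.mem_inter.mp he).1)).1
  have ha_lt : a < 1 :=
    prod_lt_one_of_mem _ _ (fun e he => (hfac e (hA (Finset.mem_sdiff.mp he).1)).1)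
      (fun e he => (hfac e (hA (Finset.mem_sdiff.mp he).1)).2) hABne
  have hb_lt : b < 1 :=
    prod_lt_one_of_mem _ _ (fun e he => (hfac e (hB (Finset.mem_sdiff.mp he).1)).1)
      (fun e he => (hfac e (hB (Finset.mem_sdiff.mp he).1)).2) hBAne
  -- product decompositions
  have hprodA : ∏ e ∈ A, (1 - p e) = c * a := by
    rw [hc_def, ha_def, Finset.prod_inter_mul_prod_diff]
  have hprodB : ∏ e ∈ B, (1 - p e) = c * b := by
    rw [hc_def, hb_def, Finset.inter_comm, Finset.prod_inter_mul_prod_diff]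
  have hprodU : ∏ e ∈ A ∪ B, (1 - p e) = c * a * b := by
    have hdisj : Disjoint A (B \ A) := Finset.disjoint_sdiff
    have : A ∪ B = A ∪ (B \ A) := by rw [Finset.union_sdiff_self_eq_union]
    rw [this, Finset.prod_union hdisj, hprodA, hb_def]
  -- sum decomposition
  have hsum : ∑ e ∈ A ∪ B, x e + ∑ e ∈ A ∩ B, x e = ∑ e ∈ A, x e + ∑ e ∈ B, x e :=
    Finset.sum_union_inter
  have hU : ∑ e ∈ A ∪ B, x e ≤ 1 - ∏ e ∈ A ∪ B, (1 - p e) :=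
    hx _ (Finset.union_subset hA hB)
  have hI : ∑ e ∈ A ∩ B, x e ≤ 1 - ∏ e ∈ A ∩ B, (1 - p e) :=
    hx _ (le_trans (Finset.inter_subset_left) hA)
  rw [htA, htB, hprodA, hprodB] at hsum
  rw [hprodU] at hU
  rw [← hc_def] at hI
  nlinarith [mul_pos hc_pos (mul_pos (sub_pos.mpr ha_lt) (sub_pos.mpr hb_lt))]
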